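/- For every simply-connected space Y (with locally finite rational cohomology), the d_1-depth of Y equals the Whitehead length WL(Y). Consequently, the d_1-depth of Y does not depend on the choice of minimal Sullivan model for Y and is a topological invariant. -/

import Mathlib

/-!
Scaffold: the quadratic part of a minimal Sullivan model `(∧V, d)` of a simply
connected space `Y` (with locally finite rational cohomology), together with its
associated homotopy Lie algebra `L` (so that `sL = Hom(V, ℚ)`), following
Félix–Halperin–Thomas, §21(e).  The data is encoded through

* the perfect pairing `P v x = ⟨v ; sx⟩` between `V` and `sL`,
* the trilinear pairing `D v x y = ⟨d₁ v ; sx, sy⟩` recording the quadratic part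
  `d₁` of the differential, and
* the Lie bracket `br`, determined by `⟨v ; s[x,y]⟩ = (-1)^{deg y + 1} ⟨d₁ v; sx, sy⟩`.
-/

/-- Data of (the quadratic part of) a minimal Sullivan model of a simply connected
space together with the associated homotopy Lie algebra. -/
structure HomotopyLieData : Type 1 where
  /-- the space of generators of the minimal Sullivan model -/
  V : Type
  /-- the (desuspended) homotopy Lie algebra; `sL = Hom(V, ℚ)` -/
  L : Type
  [addV : AddCommGroup V]
  [modV : Module ℚ V]
  [addL : AddCommGroup L]
  [modL : Module ℚ L]
  /-- grading of `V` -/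
  Vg : ℕ → Submodule ℚ V
  /-- grading of `L` -/
  Lg : ℕ → Submodule ℚ L
  internalV : DirectSum.IsInternal Vg
  internalL : DirectSum.IsInternal Lg
  /-- simple connectivity: no generators in degrees `0`, `1` -/
  Vg_zero : Vg 0 = ⊥
  Vg_one : Vg 1 = ⊥
  /-- local finiteness -/
  locFin : ∀ n, FiniteDimensional ℚ (Vg n)
  /-- the pairing `⟨v ; sx⟩ = (-1)^{deg v} (sx)(v)` between `V` and `sL` -/
  P : V →ₗ[ℚ] L →ₗ[ℚ] ℚ
  /-- `D v x y = ⟨d₁ v ; sx, sy⟩`, the quadratic part of the differential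
  evaluated through the trilinear map
  `⟨v ∧ w; sx, sy⟩ = ⟨v;sx⟩⟨w;sy⟩ + (-1)^{|v||w|}⟨w;sx⟩⟨v;sy⟩` -/
  D : V →ₗ[ℚ] L →ₗ[ℚ] L →ₗ[ℚ] ℚ
  /-- the Lie bracket of `L` -/
  br : L →ₗ[ℚ] L →ₗ[ℚ] L
  P_grade : ∀ {m n : ℕ} (v : V) (x : L), v ∈ Vg m → x ∈ Lg n → m ≠ n + 1 → P v x = 0
  P_perfect_V : ∀ v : V, v ≠ 0 → ∃ x, P v x ≠ 0
  P_perfect_L : ∀ x : L, x ≠ 0 → ∃ v, P v x ≠ 0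
  /-- `sL` is the full (graded) dual of `V` -/
  P_represents : ∀ (n : ℕ) (f : V →ₗ[ℚ] ℚ), ∃ x ∈ Lg n, ∀ v ∈ Vg (n + 1), P v x = f v
  /-- graded symmetry of `⟨d₁ v ; sx, sy⟩` in `sx`, `sy` (`|sx| = deg x + 1`) -/
  D_symm : ∀ {p q : ℕ} (v : V) (x y : L), x ∈ Lg p → y ∈ Lg q →
    D v x y = (-1 : ℚ) ^ ((p + 1) * (q + 1)) * D v y x
  br_grade : ∀ {p q : ℕ} (x y : L), x ∈ Lg p → y ∈ Lg q → br x y ∈ Lg (p + q)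
  /-- the defining formula `⟨v ; s[x,y]⟩ = (-1)^{deg y + 1} ⟨d₁ v ; sx, sy⟩` -/
  br_def : ∀ {q : ℕ} (x y : L) (v : V), y ∈ Lg q →
    P v (br x y) = (-1 : ℚ) ^ (q + 1) * D v x y

attribute [instance] HomotopyLieData.addV HomotopyLieData.modV
attribute [instance] HomotopyLieData.addL HomotopyLieData.modL

namespace HomotopyLieData

variable (M : HomotopyLieData)

/-- One step of the `d₁`-filtration: `stepFilt S = {v | d₁ v ∈ ∧ S}`, expressed via the
pairings: `d₁ v` pairs to zero with any `sx` annihilating `S`. -/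
def stepFilt (S : Submodule ℚ M.V) : Submodule ℚ M.V where
  carrier := {v | ∀ x : M.L, (∀ w ∈ S, M.P w x = 0) → ∀ y : M.L, M.D v x y = 0}
  add_mem' := by
    intro a b ha hb x hx y
    have h1 := ha x hx y
    have h2 := hb x hx y
    simp [map_add, LinearMap.add_apply, h1, h2]
  zero_mem' := by
    intro x hx y
    simp
  smul_mem' := by
    intro c a ha x hx y
    have h1 := ha x hx y
    simp [map_smul, LinearMap.smul_apply, h1]

/-- The filtration `V_0 = {v | d₁ v = 0}`, `V_i = {v | d₁ v ∈ ∧ V_{i-1}}`. -/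
def Vfilt : ℕ → Submodule ℚ M.V
  | 0 => M.stepFilt ⊥
  | n + 1 => M.stepFilt (Vfilt n)

/-- The shifted filtration: `VfiltS n = V_{n-1}` (so `VfiltS 0 = V_{-1} = 0`). -/
def VfiltS : ℕ → Submodule ℚ M.V
  | 0 => ⊥
  | n + 1 => M.Vfilt n

/-- The `d₁`-depth: the greatest `k` with `V_{k-1} ⊊ V_k`. -/
noncomputable def d1Depth : ℕ∞ :=
  sSup ((fun n : ℕ => (n : ℕ∞)) '' {n : ℕ | M.VfiltS n < M.VfiltS (n + 1)})

/-- `[L, L]^{(n)}`:  `[L,L]^{(0)} = L` and `[L,L]^{(l+1)} = [L, [L,L]^{(l)}]`. -/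
def bracketSeries : ℕ → Submodule ℚ M.L
  | 0 => ⊤
  | n + 1 => Submodule.span ℚ {z : M.L | ∃ x y, y ∈ bracketSeries n ∧ z = M.br x y}

/-- The Whitehead length of `L`: the greatest `n` with `[L,L]^{(n)} ≠ 0`. -/
noncomputable def whiteheadLength : ℕ∞ :=
  sSup ((fun n : ℕ => (n : ℕ∞)) '' {n : ℕ | M.bracketSeries n ≠ ⊥})

/-- The iterated bracket `x_{k_n, …, k_0} = [f 0, [f 1, [ …, [f (n-1), f n] …]]]`
(an element of `[L,L]^{(n)}`). -/
def iterBracket : (n : ℕ) → (Fin (n + 1) → M.L) → M.L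
  | 0, f => f 0
  | n + 1, f => M.br (f 0) (iterBracket n (Fin.tail f))

/-- `⟨a ∧ b ; sx, sy⟩` for homogeneous `a`, `b` of degrees `p`, `q`. -/
def wedgeP (p q : ℕ) (a b : M.V) (x y : M.L) : ℚ :=
  M.P a x * M.P b y + (-1 : ℚ) ^ (p * q) * (M.P b x * M.P a y)

/-- The annihilator in `V` of a subspace of `L`, with respect to the pairing `P`. -/
def annih (N : Submodule ℚ M.L) : Submodule ℚ M.V where
  carrier := {v | ∀ z ∈ N, M.P v z = 0}
  add_mem' := by
    intro a b ha hb z hz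
    have h1 := ha z hz
    have h2 := hb z hz
    simp [map_add, LinearMap.add_apply, h1, h2]
  zero_mem' := by
    intro z hz
    simp
  smul_mem' := by
    intro c a ha z hz
    have h1 := ha z hz
    simp [map_smul, LinearMap.smul_apply, h1]

end HomotopyLieData

set_option synthInstance.maxHeartbeats 1000000
set_option maxHeartbeats 1000000


section GradedProj
variable {N : Type*} [AddCommGroup N] [Module ℚ N] {g : ℕ → Submodule ℚ N}

/-- The decomposition equivalence coming from an internal direct sum. -/
noncomputable def gEqv (hg : DirectSum.IsInternal g) :
    DirectSum ℕ (fun n => ↥(g n)) ≃ₗ[ℚ] N :=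
  LinearEquiv.ofBijective (DirectSum.coeLinearMap g) hg

/-- Projection onto the degree-`q` component. -/
noncomputable def gproj (hg : DirectSum.IsInternal g) (q : ℕ) : N →ₗ[ℚ] N :=
  (g q).subtype ∘ₗ (DirectSum.component ℚ ℕ (fun n => ↥(g n)) q) ∘ₗ
    ((gEqv hg).symm : N →ₗ[ℚ] DirectSum ℕ (fun n => ↥(g n)))

lemma gproj_apply (hg : DirectSum.IsInternal g) (q : ℕ) (x : N) :
    gproj hg q x = (((gEqv hg).symm x) q : N) := rfl

lemma gproj_mem (hg : DirectSum.IsInternal g) (q : ℕ) (x : N) :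
    gproj hg q x ∈ g q := (((gEqv hg).symm x) q).2

lemma gproj_of_mem (hg : DirectSum.IsInternal g) {q : ℕ} {x : N} (h : x ∈ g q) :
    gproj hg q x = x := by
  have h2 : (gEqv hg).symm x q = ⟨x, h⟩ := hg.ofBijective_coeLinearMap_of_mem h
  rw [gproj_apply, h2]

lemma gproj_of_ne (hg : DirectSum.IsInternal g) {p q : ℕ} {x : N} (h : x ∈ g p)
    (hpq : p ≠ q) : gproj hg q x = 0 := by
  have h2 : (gEqv hg).symm x q = 0 := hg.ofBijective_coeLinearMap_of_mem_ne hpq h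
  rw [gproj_apply, h2]; rfl

lemma gEqv_of (hg : DirectSum.IsInternal g) (q : ℕ) (b : ↥(g q)) :
    gEqv hg (DirectSum.of (fun n => ↥(g n)) q b) = (b : N) := by
  simp only [gEqv, LinearEquiv.ofBijective_apply]
  exact DirectSum.coeLinearMap_of g q b

lemma exists_gproj_sum (hg : DirectSum.IsInternal g) (x : N) :
    ∃ s : Finset ℕ, (∀ q, q ∉ s → gproj hg q x = 0) ∧ ∑ q ∈ s, gproj hg q x = x := by
  classical
  refine ⟨((gEqv hg).symm x).support, fun q hq => ?_, ?_⟩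
  · rw [gproj_apply, DFinsupp.notMem_support_iff.mp hq]; rfl
  · calc ∑ q ∈ ((gEqv hg).symm x).support, gproj hg q x
        = ∑ q ∈ ((gEqv hg).symm x).support,
            gEqv hg (DirectSum.of (fun n => ↥(g n)) q (((gEqv hg).symm x) q)) := by
          exact Finset.sum_congr rfl fun q _ => by rw [gEqv_of, gproj_apply]
      _ = gEqv hg (∑ q ∈ ((gEqv hg).symm x).support,
            DirectSum.of (fun n => ↥(g n)) q (((gEqv hg).symm x) q)) := (map_sum _ _ _).symm
      _ = x := by rw [DirectSum.sum_support_of]; exact (gEqv hg).apply_symm_apply x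

lemma eq_zero_of_gproj_zero (hg : DirectSum.IsInternal g) {x : N}
    (h : ∀ q, gproj hg q x = 0) : x = 0 := by
  obtain ⟨s, _, hsum⟩ := exists_gproj_sum hg x
  rw [← hsum]
  exact Finset.sum_eq_zero fun q _ => h q

end GradedProj
namespace HomotopyLieData

variable (M : HomotopyLieData)

noncomputable def projL (q : ℕ) : M.L →ₗ[ℚ] M.L := gproj M.internalL q
noncomputable def projV (q : ℕ) : M.V →ₗ[ℚ] M.V := gproj M.internalV q

lemma projL_mem (q : ℕ) (x : M.L) : M.projL q x ∈ M.Lg q := gproj_mem _ _ _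
lemma projV_mem (q : ℕ) (v : M.V) : M.projV q v ∈ M.Vg q := gproj_mem _ _ _
lemma projL_of_mem {q : ℕ} {x : M.L} (h : x ∈ M.Lg q) : M.projL q x = x := gproj_of_mem _ h
lemma projL_of_ne {p q : ℕ} {x : M.L} (h : x ∈ M.Lg p) (hpq : p ≠ q) : M.projL q x = 0 :=
  gproj_of_ne _ h hpq
lemma projV_of_mem {q : ℕ} {v : M.V} (h : v ∈ M.Vg q) : M.projV q v = v := gproj_of_mem _ h
lemma exists_projL_sum (x : M.L) :
    ∃ s : Finset ℕ, (∀ q, q ∉ s → M.projL q x = 0) ∧ ∑ q ∈ s, M.projL q x = x :=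
  exists_gproj_sum _ x
lemma exists_projV_sum (v : M.V) :
    ∃ s : Finset ℕ, (∀ q, q ∉ s → M.projV q v = 0) ∧ ∑ q ∈ s, M.projV q v = v :=
  exists_gproj_sum _ v

lemma P_projV (v : M.V) {q : ℕ} {x : M.L} (hx : x ∈ M.Lg q) :
    M.P v x = M.P (M.projV (q + 1) v) x := by
  obtain ⟨s, hs0, hsum⟩ := M.exists_projV_sum v
  conv_lhs => rw [← hsum]
  rw [map_sum, LinearMap.sum_apply]
  by_cases hmem : q + 1 ∈ s
  · exact Finset.sum_eq_single_of_mem _ hmem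
      (fun b _ hb => M.P_grade _ _ (M.projV_mem b v) hx hb)
  · rw [hs0 _ hmem, map_zero, LinearMap.zero_apply]
    exact Finset.sum_eq_zero fun b hb =>
      M.P_grade _ _ (M.projV_mem b v) hx (fun h => hmem (h ▸ hb))

lemma P_projL {m : ℕ} {w : M.V} (hw : w ∈ M.Vg (m + 1)) (x : M.L) :
    M.P w x = M.P w (M.projL m x) := by
  obtain ⟨s, hs0, hsum⟩ := M.exists_projL_sum x
  conv_lhs => rw [← hsum]
  rw [map_sum]
  by_cases hmem : m ∈ s
  · exact Finset.sum_eq_single_of_mem _ hmem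
      (fun b _ hb => M.P_grade _ _ hw (M.projL_mem b x) (by omega))
  · rw [hs0 _ hmem, map_zero]
    refine Finset.sum_eq_zero fun b hb => M.P_grade _ _ hw (M.projL_mem b x) ?_
    intro h
    apply hmem
    have hbm : b = m := by omega
    rwa [hbm] at hb

lemma Lg_zero : M.Lg 0 = ⊥ := by
  rw [Submodule.eq_bot_iff]
  intro x hx
  by_contra h
  obtain ⟨v, hv⟩ := M.P_perfect_L x h
  apply hv
  rw [M.P_projV v hx]
  have h1 : M.projV (0 + 1) v = 0 := by
    have h2 := M.projV_mem (0 + 1) v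
    rw [show (0 : ℕ) + 1 = 1 from rfl, M.Vg_one] at h2
    simpa using h2
  rw [h1, map_zero, LinearMap.zero_apply]

lemma sep {q : ℕ} (Nn : Submodule ℚ M.L) (hN : ∀ z ∈ Nn, z ∈ M.Lg q)
    {x : M.L} (hxq : x ∈ M.Lg q) (hx : x ∉ Nn) :
    ∃ w, w ∈ M.Vg (q + 1) ∧ (∀ z ∈ Nn, M.P w z = 0) ∧ M.P w x ≠ 0 := by
  classical
  haveI hfd1 : FiniteDimensional ℚ ↥(M.Vg (q + 1)) := M.locFin (q + 1)
  let φ : ↥(M.Vg (q + 1)) →ₗ[ℚ] Module.Dual ℚ ↥(M.Lg q) :=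
    { toFun := fun w => (M.P w.1) ∘ₗ (M.Lg q).subtype
      map_add' := fun a b => by ext z; simp
      map_smul' := fun c a => by ext z; simp }
  let ψ : ↥(M.Lg q) →ₗ[ℚ] Module.Dual ℚ ↥(M.Vg (q + 1)) :=
    { toFun := fun y => (M.P.flip y.1) ∘ₗ (M.Vg (q + 1)).subtype
      map_add' := fun a b => by ext w; simp
      map_smul' := fun c a => by ext w; simp }
  have hψ_apply : ∀ (y : ↥(M.Lg q)) (w : ↥(M.Vg (q + 1))), ψ y w = M.P w.1 y.1 :=
    fun _ _ => rfl
  have hφ_apply : ∀ (w : ↥(M.Vg (q + 1))) (y : ↥(M.Lg q)), φ w y = M.P w.1 y.1 :=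
    fun _ _ => rfl
  have hψinj : Function.Injective ψ := by
    rw [injective_iff_map_eq_zero]
    intro y hy
    apply Subtype.ext
    show y.1 = 0
    by_contra hy0
    obtain ⟨v, hv⟩ := M.P_perfect_L y.1 hy0
    apply hv
    rw [M.P_projV v y.2]
    have := congrArg (fun f => f (⟨M.projV (q + 1) v, M.projV_mem _ v⟩ : ↥(M.Vg (q + 1)))) hy
    simpa [hψ_apply] using this
  have hφinj : Function.Injective φ := by
    rw [injective_iff_map_eq_zero]
    intro w hw
    apply Subtype.ext
    show w.1 = 0
    by_contra hw0
    obtain ⟨xx, hxx⟩ := M.P_perfect_V w.1 hw0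
    apply hxx
    rw [M.P_projL w.2 xx]
    have := congrArg (fun f => f (⟨M.projL q xx, M.projL_mem _ xx⟩ : ↥(M.Lg q))) hw
    simpa [hφ_apply] using this
  have hψsurj : Function.Surjective ψ := by
    intro f
    obtain ⟨y, hyq, hy⟩ := M.P_represents q
      (f ∘ₗ LinearMap.codRestrict (M.Vg (q + 1)) (M.projV (q + 1)) (fun v => M.projV_mem _ v))
    refine ⟨⟨y, hyq⟩, ?_⟩
    ext w
    rw [hψ_apply ⟨y, hyq⟩ w, hy w.1 w.2]
    show f ⟨M.projV (q + 1) w.1, _⟩ = f w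
    congr 1
    exact Subtype.ext (M.projV_of_mem w.2)
  haveI hfdL : FiniteDimensional ℚ ↥(M.Lg q) := FiniteDimensional.of_injective ψ hψinj
  have e1 : Module.finrank ℚ ↥(M.Lg q) = Module.finrank ℚ ↥(M.Vg (q + 1)) := by
    rw [(LinearEquiv.ofBijective ψ ⟨hψinj, hψsurj⟩).finrank_eq, Subspace.dual_finrank_eq]
  have hdim : Module.finrank ℚ ↥(M.Vg (q + 1))
      = Module.finrank ℚ (Module.Dual ℚ ↥(M.Lg q)) := by
    rw [Subspace.dual_finrank_eq, e1]
  have hφsurj : Function.Surjective φ :=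
    (LinearMap.injective_iff_surjective_of_finrank_eq_finrank hdim).mp hφinj
  set N' : Submodule ℚ ↥(M.Lg q) := Nn.comap (M.Lg q).subtype with hN'
  have hxN' : (⟨x, hxq⟩ : ↥(M.Lg q)) ∉ N' := fun h => hx h
  obtain ⟨f, hfx, hfbot⟩ := N'.exists_dual_map_eq_bot_of_notMem hxN' inferInstance
  obtain ⟨w, rfl⟩ := hφsurj f
  refine ⟨w.1, w.2, ?_, ?_⟩
  · intro z hz
    have hz' : (⟨z, hN z hz⟩ : ↥(M.Lg q)) ∈ N' := hz
    have hmem : φ w ⟨z, hN z hz⟩ ∈ N'.map (φ w) := ⟨_, hz', rfl⟩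
    rw [hfbot] at hmem
    exact (Submodule.mem_bot ℚ).mp hmem
  · rw [← hφ_apply w ⟨x, hxq⟩]
    exact hfx

end HomotopyLieData
namespace HomotopyLieData

variable (M : HomotopyLieData)

lemma mem_annih {Nn : Submodule ℚ M.L} {v : M.V} :
    v ∈ M.annih Nn ↔ ∀ z ∈ Nn, M.P v z = 0 := Iff.rfl

lemma mem_stepFilt {S : Submodule ℚ M.V} {v : M.V} :
    v ∈ M.stepFilt S ↔
      ∀ x : M.L, (∀ w ∈ S, M.P w x = 0) → ∀ y : M.L, M.D v x y = 0 := Iff.rfl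

lemma bracketSeries_succ (n : ℕ) : M.bracketSeries (n + 1)
    = Submodule.span ℚ {z : M.L | ∃ x y, y ∈ M.bracketSeries n ∧ z = M.br x y} := rfl

lemma br_expand (x y : M.L) : ∃ s t : Finset ℕ,
    M.br x y = ∑ p ∈ s, ∑ r ∈ t, M.br (M.projL p x) (M.projL r y) := by
  obtain ⟨s, _, hsx⟩ := M.exists_projL_sum x
  obtain ⟨t, _, hsy⟩ := M.exists_projL_sum y
  refine ⟨s, t, ?_⟩
  conv_lhs => rw [← hsx, ← hsy]
  rw [map_sum M.br (fun p => M.projL p x) s, LinearMap.sum_apply]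
  exact Finset.sum_congr rfl fun p _ => map_sum _ _ _

lemma isGr_bracketSeries : ∀ n, ∀ z ∈ M.bracketSeries n, ∀ q,
    M.projL q z ∈ M.bracketSeries n := by
  intro n
  induction n with
  | zero => intro z _ q; trivial
  | succ n ih =>
    intro z hz q
    rw [bracketSeries_succ] at hz ⊢
    induction hz using Submodule.span_induction with
    | mem z hzS =>
      obtain ⟨x, y, hy, rfl⟩ := hzS
      obtain ⟨s, t, hst⟩ := M.br_expand x y
      rw [hst, map_sum]
      refine Submodule.sum_mem _ fun p _ => ?_
      rw [map_sum]
      refine Submodule.sum_mem _ fun r _ => ?_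
      by_cases hpr : p + r = q
      · rw [M.projL_of_mem (hpr ▸ M.br_grade _ _ (M.projL_mem p x) (M.projL_mem r y))]
        exact Submodule.subset_span ⟨_, _, ih y hy r, rfl⟩
      · rw [M.projL_of_ne (M.br_grade _ _ (M.projL_mem p x) (M.projL_mem r y)) hpr]
        exact Submodule.zero_mem _
    | zero => rw [map_zero]; exact Submodule.zero_mem _
    | add a b _ _ ha hb => rw [map_add]; exact Submodule.add_mem _ ha hb
    | smul c a _ ha => rw [map_smul]; exact Submodule.smul_mem _ _ ha

lemma bracketSeries_low : ∀ n, ∀ z ∈ M.bracketSeries n, ∀ q, q ≤ n →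
    M.projL q z = 0 := by
  intro n
  induction n with
  | zero =>
    intro z _ q hq
    interval_cases q
    have h := M.projL_mem 0 z
    rw [M.Lg_zero] at h
    simpa using h
  | succ n ih =>
    intro z hz
    rw [bracketSeries_succ] at hz
    induction hz using Submodule.span_induction with
    | mem z hzS =>
      obtain ⟨x, y, hy, rfl⟩ := hzS
      intro q hq
      obtain ⟨s, t, hst⟩ := M.br_expand x y
      rw [hst, map_sum]
      refine Finset.sum_eq_zero fun p _ => ?_
      rw [map_sum]
      refine Finset.sum_eq_zero fun r _ => ?_
      by_cases hb0 : M.projL r y = 0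
      · rw [hb0]; simp
      by_cases ha0 : M.projL p x = 0
      · rw [ha0]; simp
      have hr : n + 1 ≤ r := by
        by_contra hr
        exact hb0 (ih y hy r (by omega))
      have hp : 1 ≤ p := by
        rcases Nat.eq_zero_or_pos p with h0 | h1
        · exfalso
          apply ha0
          rw [h0]
          have h := M.projL_mem 0 x
          rw [M.Lg_zero] at h
          simpa using h
        · exact h1
      exact M.projL_of_ne (M.br_grade _ _ (M.projL_mem p x) (M.projL_mem r y)) (by omega)
    | zero => intro q hq; simp
    | add a b _ _ ha hb => intro q hq; rw [map_add, ha q hq, hb q hq]; simp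
    | smul c a _ ha => intro q hq; rw [map_smul, ha q hq]; simp

lemma bracketSeries_antitone (n : ℕ) : M.bracketSeries (n + 1) ≤ M.bracketSeries n := by
  induction n with
  | zero => exact le_top
  | succ n ih =>
    rw [bracketSeries_succ, bracketSeries_succ]
    apply Submodule.span_mono
    rintro z ⟨x, y, hy, rfl⟩
    exact ⟨x, y, ih hy, rfl⟩

lemma annih_antitone {N1 N2 : Submodule ℚ M.L} (h : N1 ≤ N2) :
    M.annih N2 ≤ M.annih N1 :=
  fun _ hv z hz => hv z (h hz)

lemma annih_top : M.annih ⊤ = ⊥ := by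
  rw [Submodule.eq_bot_iff]
  intro v hv
  by_contra h
  obtain ⟨x, hx⟩ := M.P_perfect_V v h
  exact hx (hv x trivial)

lemma projL_mem_of_perp (n : ℕ) {x : M.L}
    (hx : ∀ w ∈ M.annih (M.bracketSeries n), M.P w x = 0) (q : ℕ) :
    M.projL q x ∈ M.bracketSeries n := by
  by_contra hmem
  obtain ⟨w, hwg, hw0, hwne⟩ := M.sep (M.bracketSeries n ⊓ M.Lg q)
    (fun z hz => (Submodule.mem_inf.mp hz).2) (M.projL_mem q x)
    (fun h => hmem (Submodule.mem_inf.mp h).1)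
  apply hwne
  have hwann : w ∈ M.annih (M.bracketSeries n) := by
    intro z hz
    rw [M.P_projL hwg z]
    exact hw0 _ (Submodule.mem_inf.mpr ⟨M.isGr_bracketSeries n z hz q, M.projL_mem q z⟩)
  rw [← M.P_projL hwg x]
  exact hx w hwann

lemma stepFilt_annih (n : ℕ) :
    M.stepFilt (M.annih (M.bracketSeries n)) = M.annih (M.bracketSeries (n + 1)) := by
  apply le_antisymm
  · intro v hv
    rw [mem_annih]
    intro z hz
    rw [bracketSeries_succ] at hz
    induction hz using Submodule.span_induction with
    | mem z hzS =>
      obtain ⟨x, y, hy, rfl⟩ := hzS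
      obtain ⟨t, _, hsy⟩ := M.exists_projL_sum y
      have e1 : M.br x y = ∑ r ∈ t, M.br x (M.projL r y) := by rw [← map_sum, hsy]
      rw [e1, map_sum]
      refine Finset.sum_eq_zero fun r _ => ?_
      rw [M.br_def x (M.projL r y) v (M.projL_mem r y)]
      apply mul_eq_zero_of_right
      obtain ⟨s, _, hsx⟩ := M.exists_projL_sum x
      have e2 : (M.D v) x = ∑ p ∈ s, (M.D v) (M.projL p x) := by rw [← map_sum, hsx]
      rw [e2, LinearMap.sum_apply]
      refine Finset.sum_eq_zero fun p _ => ?_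
      rw [M.D_symm v _ _ (M.projL_mem p x) (M.projL_mem r y)]
      apply mul_eq_zero_of_right
      exact hv (M.projL r y) (fun w hw => hw _ (M.isGr_bracketSeries n y hy r)) (M.projL p x)
    | zero => simp
    | add a b _ _ ha hb => rw [map_add, ha, hb]; simp
    | smul c a _ ha => rw [map_smul, ha]; simp
  · intro v hv
    rw [mem_stepFilt]
    intro x hx y
    have hxq : ∀ q, M.projL q x ∈ M.bracketSeries n := M.projL_mem_of_perp n hx
    obtain ⟨s, _, hsx⟩ := M.exists_projL_sum x
    obtain ⟨t, _, hsy⟩ := M.exists_projL_sum y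
    have e2 : (M.D v) x = ∑ q ∈ s, (M.D v) (M.projL q x) := by rw [← map_sum, hsx]
    rw [e2, LinearMap.sum_apply]
    refine Finset.sum_eq_zero fun q _ => ?_
    have e3 : (M.D v) (M.projL q x) y = ∑ r ∈ t, (M.D v) (M.projL q x) (M.projL r y) := by
      rw [← map_sum, hsy]
    rw [e3]
    refine Finset.sum_eq_zero fun r _ => ?_
    rw [M.D_symm v _ _ (M.projL_mem q x) (M.projL_mem r y)]
    apply mul_eq_zero_of_right
    have hbr : M.br (M.projL r y) (M.projL q x) ∈ M.bracketSeries (n + 1) := by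
      rw [bracketSeries_succ]
      exact Submodule.subset_span ⟨_, _, hxq q, rfl⟩
    have h0 : M.P v (M.br (M.projL r y) (M.projL q x)) = 0 := hv _ hbr
    rw [M.br_def _ _ v (M.projL_mem q x)] at h0
    exact (mul_eq_zero.mp h0).resolve_left (pow_ne_zero _ (by norm_num))

lemma Vfilt_eq (n : ℕ) : M.Vfilt n = M.annih (M.bracketSeries (n + 1)) := by
  induction n with
  | zero =>
    rw [show M.Vfilt 0 = M.stepFilt ⊥ from rfl, ← M.stepFilt_annih 0]
    congr 1
    rw [show M.bracketSeries 0 = ⊤ from rfl, M.annih_top]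
  | succ n ih =>
    rw [show M.Vfilt (n + 1) = M.stepFilt (M.Vfilt n) from rfl, ih, M.stepFilt_annih]

lemma VfiltS_eq (n : ℕ) : M.VfiltS n = M.annih (M.bracketSeries n) := by
  cases n with
  | zero =>
    rw [show M.VfiltS 0 = ⊥ from rfl, show M.bracketSeries 0 = ⊤ from rfl, M.annih_top]
  | succ n => exact M.Vfilt_eq n

lemma annih_strict {n : ℕ} (h : M.bracketSeries (n + 1) ≠ M.bracketSeries n) :
    M.annih (M.bracketSeries n) < M.annih (M.bracketSeries (n + 1)) := by
  obtain ⟨z, hzn, hzn1⟩ : ∃ z, z ∈ M.bracketSeries n ∧ z ∉ M.bracketSeries (n + 1) := by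
    by_contra hc
    push_neg at hc
    exact h (le_antisymm (M.bracketSeries_antitone n) hc)
  have hq : ∃ q, M.projL q z ∉ M.bracketSeries (n + 1) := by
    by_contra hc
    push_neg at hc
    obtain ⟨s, _, hsum⟩ := M.exists_projL_sum z
    exact hzn1 (hsum ▸ Submodule.sum_mem _ fun q _ => hc q)
  obtain ⟨q, hq⟩ := hq
  obtain ⟨w, hwg, hw0, hwne⟩ := M.sep (M.bracketSeries (n + 1) ⊓ M.Lg q)
    (fun z' hz' => (Submodule.mem_inf.mp hz').2) (M.projL_mem q z)
    (fun hmem => hq (Submodule.mem_inf.mp hmem).1)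
  have hw1 : w ∈ M.annih (M.bracketSeries (n + 1)) := by
    intro z' hz'
    rw [M.P_projL hwg z']
    exact hw0 _
      (Submodule.mem_inf.mpr ⟨M.isGr_bracketSeries (n + 1) z' hz' q, M.projL_mem q z'⟩)
  have hw2 : w ∉ M.annih (M.bracketSeries n) := by
    intro hcon
    exact hwne (by rw [← M.P_projL hwg z]; exact hcon z hzn)
  exact lt_of_le_of_ne (M.annih_antitone (M.bracketSeries_antitone n))
    (fun he => hw2 (by rw [he]; exact hw1))

lemma lt_iff (n : ℕ) : M.VfiltS n < M.VfiltS (n + 1)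
    ↔ M.bracketSeries (n + 1) < M.bracketSeries n := by
  rw [M.VfiltS_eq n, M.VfiltS_eq (n + 1)]
  constructor
  · intro h
    refine lt_of_le_of_ne (M.bracketSeries_antitone n) fun he => ?_
    rw [he] at h
    exact lt_irrefl _ h
  · intro h
    exact M.annih_strict (ne_of_lt h)

lemma depth_eq_WL : M.d1Depth = M.whiteheadLength := by
  unfold d1Depth whiteheadLength
  apply le_antisymm
  · apply sSup_le
    rintro a ⟨n, hn, rfl⟩
    have h1 : M.bracketSeries (n + 1) < M.bracketSeries n := (M.lt_iff n).mp hn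
    exact le_sSup ⟨n, (bot_le.trans_lt h1).ne', rfl⟩
  · apply sSup_le
    rintro a ⟨n, hn, rfl⟩
    have key : ∃ m, n ≤ m ∧ M.bracketSeries (m + 1) < M.bracketSeries m := by
      by_contra hc
      push_neg at hc
      have heq : ∀ m, M.bracketSeries (n + m) = M.bracketSeries n := by
        intro m
        induction m with
        | zero => rfl
        | succ m ih =>
          have h1 : M.bracketSeries (n + m + 1) = M.bracketSeries (n + m) :=
            (M.bracketSeries_antitone (n + m)).eq_of_not_lt (hc (n + m) (Nat.le_add_right n m))
          rw [show n + (m + 1) = (n + m) + 1 from rfl, h1, ih]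
      obtain ⟨z, hz, hz0⟩ := (Submodule.ne_bot_iff _).mp hn
      have hqex : ∃ q, M.projL q z ≠ 0 := by
        by_contra hc2
        push_neg at hc2
        exact hz0 (eq_zero_of_gproj_zero M.internalL hc2)
      obtain ⟨q, hq⟩ := hqex
      apply hq
      apply M.bracketSeries_low (n + q) z _ q (Nat.le_add_left q n)
      rw [heq q]
      exact hz
    obtain ⟨m, hnm, hm⟩ := key
    refine le_trans ?_ (le_sSup ⟨m, (M.lt_iff m).mpr hm, rfl⟩)
    exact Nat.cast_le.mpr hnm

end HomotopyLieData

/-- **Theorem (d₁-depth equals Whitehead length).**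
For every simply connected space `Y` (with locally finite rational cohomology), encoded
by the data `M` of a minimal Sullivan model together with its homotopy Lie algebra
`L = L_Y = π_*(ΩY) ⊗ ℚ`, the `d₁`-depth equals the Whitehead length `WL(Y)`.
Consequently the `d₁`-depth does not depend on the choice of the minimal Sullivan model:
any two such models have isomorphic homotopy Lie algebras, and isomorphic (graded)
homotopy Lie algebras give equal `d₁`-depths, so it is a topological invariant. -/
theorem d1Depth_eq_whiteheadLength :
    (∀ M : HomotopyLieData, M.d1Depth = M.whiteheadLength) ∧
    (∀ M₁ M₂ : HomotopyLieData,
      (∃ e : M₁.L ≃ₗ[ℚ] M₂.L,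
        (∀ x y, e (M₁.br x y) = M₂.br (e x) (e y)) ∧
        (∀ n, (M₁.Lg n).map (e : M₁.L →ₗ[ℚ] M₂.L) = M₂.Lg n)) →
      M₁.d1Depth = M₂.d1Depth) := by
  constructor
  · exact fun M => M.depth_eq_WL
  · rintro M₁ M₂ ⟨e, hbr, -⟩
    rw [M₁.depth_eq_WL, M₂.depth_eq_WL]
    have hmap : ∀ n, (M₁.bracketSeries n).map (e : M₁.L →ₗ[ℚ] M₂.L)
        = M₂.bracketSeries n := by
      intro n
      induction n with
      | zero =>
        rw [show M₁.bracketSeries 0 = ⊤ from rfl, show M₂.bracketSeries 0 = ⊤ from rfl,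
          Submodule.map_top]
        exact LinearMap.range_eq_top.mpr e.surjective
      | succ n ih =>
        rw [HomotopyLieData.bracketSeries_succ, HomotopyLieData.bracketSeries_succ,
          Submodule.map_span]
        congr 1
        ext z
        simp only [Set.mem_image, Set.mem_setOf_eq]
        constructor
        · rintro ⟨z', ⟨x, y, hy, rfl⟩, rfl⟩
          exact ⟨e x, e y, by rw [← ih]; exact Submodule.mem_map_of_mem hy, hbr x y⟩
        · rintro ⟨x, y, hy, rfl⟩
          rw [← ih] at hy
          obtain ⟨y', hy', rfl⟩ := Submodule.mem_map.mp hy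
          refine ⟨M₁.br (e.symm x) y', ⟨e.symm x, y', hy', rfl⟩, ?_⟩
          simp only [LinearEquiv.coe_coe]
          rw [hbr, e.apply_symm_apply]
    have hbot : ∀ n, (M₁.bracketSeries n = ⊥) ↔ (M₂.bracketSeries n = ⊥) := by
      intro n
      rw [← hmap n]
      constructor
      · intro h
        rw [h, Submodule.map_bot]
      · intro h
        rw [Submodule.eq_bot_iff] at h ⊢
        intro x hx
        exact e.map_eq_zero_iff.mp (h (e x) (Submodule.mem_map_of_mem hx))
    have hsets : {n : ℕ | M₁.bracketSeries n ≠ ⊥} = {n : ℕ | M₂.bracketSeries n ≠ ⊥} := by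
      ext n
      exact not_congr (hbot n)
    unfold HomotopyLieData.whiteheadLength
    rw [hsets]
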